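/- Let θ: A → A^λ be a primitive bijective substitution of constant length λ ≥ 2 on a finite alphabet A with θ(a₀)[0] = a₀ and σ_0 = id_A, and let θ̄: G → G^λ, θ̄(τ) = (σ_0∘τ, …, σ_{λ-1}∘τ), be its group cover substitution on the subgroup G ≤ Sym(A) generated by the column maps (θ̄ has fixed letter id_A). Then the map F: X(θ̄) → A^ℤ defined by F(y)[n] = (y[n])(a₀) is continuous, satisfies F ∘ S = S ∘ F, and F(X(θ̄)) = X(θ). Hence (S, X(θ)) is a topological factor of (S, X(θ̄)). -/

import Mathlib

/-- The `n`-th iterate of a substitution of constant length `l`: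
`substIter l θ n a k` is the `k`-th letter of the word `θⁿ(a)` (of length `lⁿ`). -/
def substIter {A : Type*} (l : ℕ) (θ : A → ℕ → A) : ℕ → A → ℕ → A
  | 0, a, _ => a
  | n + 1, a, k => θ (substIter l θ n a (k / l)) (k % l)

/-- The fixed point `x_θ` of the substitution `θ` starting with the letter `a₀`
(when `l ≥ 2` and `θ(a₀)[0] = a₀`, this is the coordinatewise limit of `θⁿ(a₀)`). -/
def substFix {A : Type*} (l : ℕ) (θ : A → ℕ → A) (a₀ : A) : ℕ → A :=
  fun n => substIter l θ (n + 1) a₀ n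

/-- The subshift of all two-sided sequences all of whose finite subwords occur in `u`. -/
def subshiftF {A : Type*} (u : ℕ → A) : Set (ℤ → A) :=
  {y | ∀ (a : ℤ) (L : ℕ), ∃ k : ℕ, ∀ j : ℕ, j < L → y (a + (j : ℤ)) = u (k + j)}

/-- The left shift on two-sided sequences. -/
def shiftMap {A : Type*} : (ℤ → A) → (ℤ → A) := fun y n => y (n + 1)

/-- **A bijective substitution system is a topological factor of its group cover.**
Let `θ` be a primitive bijective substitution of constant length `l ≥ 2` with columns
`σ_i`, `σ_0 = id`, and fixed letter `a₀` (`θ(a₀)[0] = a₀`), and let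
`θ̄(τ) = (σ_0 ∘ τ, …, σ_{l-1} ∘ τ)` be its group cover substitution (with fixed letter `id`).
Then `F(y)[n] = (y[n])(a₀)` is continuous, commutes with the shift, and maps `X(θ̄)`
onto `X(θ)`. -/
lemma iter_apply {A : Type*} (l : ℕ) (σ : ℕ → Equiv.Perm A) (τ : Equiv.Perm A) (a : A) :
    ∀ (n k : ℕ),
      (substIter l (fun (τ : Equiv.Perm A) i => σ i * τ) n τ k) a
        = substIter l (fun a i => σ i a) n (τ a) k := by
  intro n
  induction n with
  | zero => intro k; rfl
  | succ n ih =>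
      intro k
      simp only [substIter, Equiv.Perm.mul_apply, ih (k / l)]

lemma fix_apply {A : Type*} (l : ℕ) (σ : ℕ → Equiv.Perm A) (a₀ : A) (n : ℕ) :
    (substFix l (fun (τ : Equiv.Perm A) i => σ i * τ) 1 n) a₀
      = substFix l (fun a i => σ i a) a₀ n := by
  simp [substFix, iter_apply]

theorem stmt_7 {A : Type*} [Fintype A] [DecidableEq A]
    [TopologicalSpace A] [DiscreteTopology A]
    [TopologicalSpace (Equiv.Perm A)] [DiscreteTopology (Equiv.Perm A)]
    (l : ℕ) (hl : 2 ≤ l)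
    (σ : ℕ → Equiv.Perm A) (hσ0 : σ 0 = 1)
    (a₀ : A) (hfix : σ 0 a₀ = a₀)
    (hprim : ∃ n : ℕ, 1 ≤ n ∧ ∀ a a' : A, ∃ k : ℕ, k < l ^ n ∧
      substIter l (fun a i => σ i a) n a k = a')
    (F : (ℤ → Equiv.Perm A) → (ℤ → A)) (hF : ∀ y n, F y n = (y n) a₀) :
    Continuous F ∧ (∀ y, F (shiftMap y) = shiftMap (F y)) ∧
      F '' subshiftF (substFix l (fun (τ : Equiv.Perm A) (i : ℕ) => σ i * τ) 1)
        = subshiftF (substFix l (fun a i => σ i a) a₀) := by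
  set ug : ℕ → Equiv.Perm A := substFix l (fun (τ : Equiv.Perm A) (i : ℕ) => σ i * τ) 1 with hug
  set u : ℕ → A := substFix l (fun a i => σ i a) a₀ with hu
  have hFu : ∀ n, (ug n) a₀ = u n := fun n => fix_apply l σ a₀ n
  refine ⟨?_, ?_, ?_⟩
  · -- continuity
    have hFeq : F = fun y n => (y n) a₀ := by funext y n; exact hF y n
    rw [hFeq]
    exact continuous_pi fun n =>
      (continuous_of_discreteTopology
        (f := fun τ : Equiv.Perm A => τ a₀)).comp (continuous_apply n)
  · intro y
    funext n
    simp [hF, shiftMap]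
  · apply Set.Subset.antisymm
    · rintro _ ⟨y, hy, rfl⟩
      intro a L
      obtain ⟨k, hk⟩ := hy a L
      exact ⟨k, fun j hj => by rw [hF, hk j hj, hFu]⟩
    · intro x hx
      have hk : ∀ m : ℕ, ∃ k : ℕ, ∀ j : ℕ, j < 2 * m + 1 →
          x (-(m : ℤ) + (j : ℤ)) = u (k + j) := fun m => hx (-(m : ℤ)) (2 * m + 1)
      choose k hk using hk
      set ys : ℕ → ℤ → Equiv.Perm A := fun m n => ug (k m + (n + (m : ℤ)).toNat) with hys
      -- approximate lifts agree with x on the window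
      have happrox : ∀ (m : ℕ) (n : ℤ), -(m : ℤ) ≤ n → n ≤ (m : ℤ) →
          (ys m n) a₀ = x n := by
        intro m n h1 h2
        set j : ℕ := (n + (m : ℤ)).toNat with hj
        have hjm : (j : ℤ) = n + m := by omega
        have hjL : j < 2 * m + 1 := by omega
        have := hk m j hjL
        rw [show -(m : ℤ) + (j : ℤ) = n by omega] at this
        simp only [hys, hFu]
        rw [this]
      -- a cluster point of the approximate lifts
      have : Finite (Equiv.Perm A) := inferInstance
      have hcs : CompactSpace (ℤ → Equiv.Perm A) := by infer_instance
      obtain ⟨y, -, hclus⟩ := isCompact_univ.exists_clusterPt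
        (f := Filter.map ys Filter.atTop) (Filter.le_principal_iff.mpr Filter.univ_mem)
      have key : ∀ (s : Finset ℤ) (M : ℕ), ∃ m, M ≤ m ∧ ∀ n ∈ s, ys m n = y n := by
        intro s M
        have hUopen : IsOpen {z : ℤ → Equiv.Perm A | ∀ n ∈ s, z n = y n} := by
          have he : {z : ℤ → Equiv.Perm A | ∀ n ∈ s, z n = y n}
              = ⋂ n ∈ s, (fun z : ℤ → Equiv.Perm A => z n) ⁻¹' {y n} := by
            ext z; simp
          rw [he]
          exact isOpen_biInter_finset fun n _ =>
            (continuous_apply n).isOpen_preimage _ (isOpen_discrete _)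
        have hU : {z : ℤ → Equiv.Perm A | ∀ n ∈ s, z n = y n} ∈ nhds y :=
          hUopen.mem_nhds (fun n _ => rfl)
        have hV : ys '' Set.Ici M ∈ Filter.map ys Filter.atTop :=
          Filter.image_mem_map (Filter.Ici_mem_atTop M)
        obtain ⟨z, hz1, hz2⟩ := clusterPt_iff_nonempty.mp hclus hU hV
        obtain ⟨m, hm, rfl⟩ := hz2
        exact ⟨m, hm, hz1⟩
      refine ⟨y, ?_, ?_⟩
      · -- y ∈ subshiftF ug
        intro a L
        obtain ⟨m, hm, hagree⟩ := key ((Finset.range L).image fun j : ℕ => a + (j : ℤ))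
          (a.natAbs + L)
        refine ⟨k m + (a + (m : ℤ)).toNat, fun j hj => ?_⟩
        have h1 : ys m (a + (j : ℤ)) = y (a + (j : ℤ)) :=
          hagree _ (Finset.mem_image.mpr ⟨j, Finset.mem_range.mpr hj, rfl⟩)
        rw [← h1]
        simp only [hys]
        congr 1
        omega
      · -- F y = x
        funext n
        obtain ⟨m, hm, hagree⟩ := key {n} n.natAbs
        have h1 : ys m n = y n := hagree n (Finset.mem_singleton_self n)
        rw [hF, ← h1]
        exact happrox m n (by omega) (by omega)
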